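/- For any indices r ≠ s with q_b < r ≤ q⋆ and q_b < s ≤ q⋆, the vector e_r − e_s (difference of standard basis vectors) is an eigenvector of the nested-case transfer matrix T with eigenvalue λ_b = (ω_in − ω_out)/(ω_in + (q⋆ − 1 − q_b)·ω_out + q_b·γ⁻¹·ω_out); in particular λ_b is an eigenvalue of T. -/

import Mathlib

open Matrix BigOperators

/-- The nested-case transfer matrix `T` of CRSBM: coordinates are indexed
by `Fin qs` (the first `qb` coordinates correspond to the brother communities
of node `i`'s own category). -/
noncomputable def nestedT (qs qb : ℕ) (γ ωin ωout : ℝ) :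
    Matrix (Fin qs) (Fin qs) ℝ :=
  let Z : ℝ := (qb : ℝ) * γ + ((qs : ℝ) - (qb : ℝ))
  let ψ : Fin qs → ℝ := fun r => if (r : ℕ) < qb then γ / Z else 1 / Z
  let F : Matrix (Fin qs) (Fin qs) ℝ :=
    Matrix.diagonal (fun r => if (r : ℕ) < qb then (1 : ℝ) else γ)
  let Ω : Matrix (Fin qs) (Fin qs) ℝ :=
    Matrix.of fun r s => if r = s then ωin else ωout
  let M : Matrix (Fin qs) (Fin qs) ℝ := Matrix.diagonal ψ * Ω * F
  let D : Matrix (Fin qs) (Fin qs) ℝ := Matrix.diagonal (fun r => ∑ s, M r s)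
  (1 - Matrix.vecMulVec ψ (fun _ => 1)) * (D⁻¹ * M)

/-- For indices `r ≠ s` both beyond the first `qb` coordinates (i.e. outside
node `i`'s own category), `e_r - e_s` is an eigenvector of the nested-case
transfer matrix `T` with eigenvalue
`λ_b = (ωin - ωout)/(ωin + (qs - 1 - qb)·ωout + qb·γ⁻¹·ωout)`;
in particular `λ_b` is an eigenvalue of `T`. -/
theorem nestedT_eigenvector_outside (qs qb : ℕ) (hqb : 2 ≤ qb) (hqs : 2 * qb ≤ qs)
    (γ ωin ωout : ℝ) (hγ : 1 < γ) (hω : ωout < ωin) (hω0 : 0 < ωout)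
    (r s : Fin qs) (hr : qb ≤ (r : ℕ)) (hs : qb ≤ (s : ℕ)) (hrs : r ≠ s) :
    nestedT qs qb γ ωin ωout *ᵥ (Pi.single r 1 - Pi.single s 1) =
      ((ωin - ωout) / (ωin + ((qs : ℝ) - 1 - (qb : ℝ)) * ωout + (qb : ℝ) * γ⁻¹ * ωout)) •
        (Pi.single r 1 - Pi.single s 1) ∧
    Module.End.HasEigenvalue (Matrix.toLin' (nestedT qs qb γ ωin ωout))
      ((ωin - ωout) / (ωin + ((qs : ℝ) - 1 - (qb : ℝ)) * ωout + (qb : ℝ) * γ⁻¹ * ωout)) := by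
  set Z : ℝ := (qb : ℝ) * γ + ((qs : ℝ) - (qb : ℝ)) with hZdef
  set ψ : Fin qs → ℝ := fun r => if (r : ℕ) < qb then γ / Z else 1 / Z with hψdef
  set F : Matrix (Fin qs) (Fin qs) ℝ :=
    Matrix.diagonal (fun r => if (r : ℕ) < qb then (1 : ℝ) else γ) with hFdef
  set Ω : Matrix (Fin qs) (Fin qs) ℝ :=
    Matrix.of (fun r s => if r = s then ωin else ωout) with hΩdef
  set M : Matrix (Fin qs) (Fin qs) ℝ := Matrix.diagonal ψ * Ω * F with hMdef
  set D : Matrix (Fin qs) (Fin qs) ℝ := Matrix.diagonal (fun r => ∑ s, M r s) with hDdef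
  have hT : nestedT qs qb γ ωin ωout
      = (1 - Matrix.vecMulVec ψ (fun _ => 1)) * (D⁻¹ * M) := rfl
  set v : Fin qs → ℝ := Pi.single r 1 - Pi.single s 1 with hvdef
  set S : ℝ := ωout * ((qb:ℝ) + ((qs:ℝ) - (qb:ℝ)) * γ) + (ωin - ωout) * γ with hSdef
  set lam : ℝ :=
    (ωin - ωout) / (ωin + ((qs : ℝ) - 1 - (qb : ℝ)) * ωout + (qb : ℝ) * γ⁻¹ * ωout) with hlamdef
  have hMapply : ∀ t u : Fin qs,
      M t u = ψ t * (if t = u then ωin else ωout) * (if (u : ℕ) < qb then 1 else γ) := by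
    intro t u
    rw [hMdef, Matrix.mul_diagonal, Matrix.diagonal_mul]
    rfl
  have hψr : ψ r = 1 / Z := if_neg (not_lt.2 hr)
  have hψs : ψ s = 1 / Z := if_neg (not_lt.2 hs)
  clear_value Z ψ F Ω M D v S lam
  have hγ0 : (0:ℝ) < γ := lt_trans one_pos hγ
  have hqbqs : qb < qs := by omega
  have hqbR : (0:ℝ) < (qb:ℝ) := by exact_mod_cast Nat.lt_of_lt_of_le Nat.zero_lt_two hqb
  have hqsR : (qb:ℝ) + 1 ≤ (qs:ℝ) := by exact_mod_cast hqbqs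
  have hZ0 : (0:ℝ) < Z := by rw [hZdef]; nlinarith
  have hS0 : (0:ℝ) < S := by
    rw [hSdef]
    have h1 : (0:ℝ) < (qb:ℝ) + ((qs:ℝ) - (qb:ℝ)) * γ := by nlinarith
    nlinarith [mul_pos hω0 h1, mul_pos (sub_pos.2 hω) hγ0]
  have hden0 : (0:ℝ) < ωin + ((qs : ℝ) - 1 - (qb : ℝ)) * ωout + (qb : ℝ) * γ⁻¹ * ωout := by
    have h1 : (0:ℝ) ≤ ((qs : ℝ) - 1 - (qb : ℝ)) * ωout := by nlinarith
    have h2 : (0:ℝ) < (qb : ℝ) * γ⁻¹ * ωout := by positivity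
    nlinarith
  have hψpos : ∀ t : Fin qs, 0 < ψ t := by
    intro t
    rw [hψdef]
    dsimp only
    split_ifs
    · exact div_pos hγ0 hZ0
    · exact div_pos one_pos hZ0
  -- Step A : M *ᵥ v
  have hMv : M *ᵥ v = (γ * (ωin - ωout) / Z) • v := by
    funext t
    simp only [Matrix.mulVec, dotProduct, hvdef, Pi.sub_apply, Pi.single_apply, mul_sub,
      Finset.sum_sub_distrib, mul_ite, mul_one, mul_zero, Finset.sum_ite_eq',
      Finset.mem_univ, if_true, Pi.smul_apply, smul_eq_mul]
    rw [hMapply t r, hMapply t s]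
    rw [if_neg (not_lt.2 hr), if_neg (not_lt.2 hs)]
    by_cases htr : t = r
    · subst htr
      simp only [if_pos rfl, if_neg hrs, if_true]
      rw [hψr]
      field_simp
      ring
    · by_cases hts : t = s
      · subst hts
        simp only [if_pos rfl, if_neg htr, if_neg (fun h : t = r => hrs h.symm), if_true]
        rw [hψs]
        field_simp
        ring
      · simp only [if_neg htr, if_neg hts]
        ring
  -- sum of the diagonal entries of F
  have hsumF : ∑ u : Fin qs, (if (u : ℕ) < qb then (1:ℝ) else γ)
      = (qb:ℝ) + ((qs:ℝ) - (qb:ℝ)) * γ := by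
    rw [Fin.sum_univ_eq_sum_range (fun i => if i < qb then (1:ℝ) else γ)]
    rw [Finset.range_eq_Ico, ← Finset.sum_Ico_consecutive _ (Nat.zero_le qb) hqbqs.le]
    rw [Finset.sum_congr rfl (fun i hi => if_pos (Finset.mem_Ico.1 hi).2),
      Finset.sum_congr rfl (fun i hi => if_neg (not_lt.2 (Finset.mem_Ico.1 hi).1))]
    rw [Finset.sum_const, Finset.sum_const, Nat.card_Ico, Nat.card_Ico]
    have : ((qs - qb : ℕ) : ℝ) = (qs:ℝ) - (qb:ℝ) := by
      push_cast [Nat.cast_sub hqbqs.le]; ring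
    simp [this]
  -- row sums of M in rows beyond qb
  have hrowsum : ∀ t : Fin qs, qb ≤ (t : ℕ) → ∑ u, M t u = S / Z := by
    intro t ht
    have hψt : ψ t = 1 / Z := by rw [hψdef]; exact if_neg (not_lt.2 ht)
    have hterm : ∀ u : Fin qs, M t u
        = ωout / Z * (if (u : ℕ) < qb then 1 else γ)
          + (if u = t then (ωin - ωout) * γ / Z else 0) := by
      intro u
      rw [hMapply t u, hψt]
      by_cases h : u = t
      · subst h
        rw [if_pos rfl, if_pos rfl, if_neg (not_lt.2 ht)]
        field_simp
        ring
      · rw [if_neg (fun hh : t = u => h hh.symm), if_neg h]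
        ring
    rw [Finset.sum_congr rfl (fun u _ => hterm u), Finset.sum_add_distrib,
      ← Finset.mul_sum, hsumF, Finset.sum_ite_eq' Finset.univ t
        (fun _ => (ωin - ωout) * γ / Z), if_pos (Finset.mem_univ t), hSdef]
    field_simp
  -- all row sums are positive
  have hne : Nonempty (Fin qs) := ⟨r⟩
  have hd0 : ∀ t : Fin qs, 0 < ∑ u, M t u := by
    intro t
    apply Finset.sum_pos _ Finset.univ_nonempty
    intro u _
    rw [hMapply]
    have h2 : (0:ℝ) < if t = u then ωin else ωout := by
      split_ifs
      · linarith
      · exact hω0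
    have h3 : (0:ℝ) < if (u:ℕ) < qb then (1:ℝ) else γ := by
      split_ifs
      · norm_num
      · exact hγ0
    exact mul_pos (mul_pos (hψpos t) h2) h3
  -- inverse of D
  have hDinv : D⁻¹ = Matrix.diagonal (fun t => (∑ u, M t u)⁻¹) := by
    apply Matrix.inv_eq_right_inv
    rw [hDdef, Matrix.diagonal_mul_diagonal, ← Matrix.diagonal_one]
    exact congrArg Matrix.diagonal (funext fun t => mul_inv_cancel₀ (hd0 t).ne')
  -- the key scalar identity
  have hγγ : γ * γ⁻¹ = 1 := mul_inv_cancel₀ hγ0.ne'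
  have hkey : γ * (ωin - ωout) / Z * (S / Z)⁻¹ = lam := by
    rw [inv_div, div_mul_div_comm, mul_comm Z S, mul_div_mul_right _ _ hZ0.ne']
    rw [hlamdef, div_eq_div_iff hS0.ne' hden0.ne', hSdef]
    linear_combination (ωin - ωout) * (qb:ℝ) * ωout * hγγ
  -- Step B : (D⁻¹ * M) *ᵥ v = lam • v
  have hDMv : (D⁻¹ * M) *ᵥ v = lam • v := by
    rw [← Matrix.mulVec_mulVec, hMv, Matrix.mulVec_smul, hDinv]
    funext t
    rw [Pi.smul_apply, Pi.smul_apply, Matrix.mulVec_diagonal, smul_eq_mul, smul_eq_mul]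
    by_cases htr : t = r
    · subst htr
      rw [hrowsum t hr]
      have hvr : v t = 1 := by
        rw [hvdef]
        simp [Pi.single_eq_same, Pi.single_eq_of_ne hrs]
      rw [hvr, mul_one, mul_one]
      exact hkey
    · by_cases hts : t = s
      · subst hts
        rw [hrowsum t hs]
        have hvs : v t = -1 := by
          rw [hvdef]
          simp [Pi.single_eq_same, Pi.single_eq_of_ne (Ne.symm hrs)]
        rw [hvs, mul_neg_one, mul_neg_one, ← hkey]
        ring
      · have hv0 : v t = 0 := by
          rw [hvdef]
          simp [Pi.single_eq_of_ne htr, Pi.single_eq_of_ne hts]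
        rw [hv0]
        ring
  -- the rank-one correction kills v
  have hproj : Matrix.vecMulVec ψ (fun _ => (1:ℝ)) *ᵥ v = 0 := by
    funext t
    simp only [Matrix.mulVec, dotProduct, Matrix.vecMulVec_apply, hvdef, Pi.sub_apply,
      Pi.single_apply, mul_sub, Finset.sum_sub_distrib, mul_ite, mul_one, mul_zero,
      Finset.sum_ite_eq', Finset.mem_univ, if_true, Pi.zero_apply]
    ring
  have hTv : nestedT qs qb γ ωin ωout *ᵥ v = lam • v := by
    rw [hT, ← Matrix.mulVec_mulVec, hDMv, Matrix.sub_mulVec, Matrix.one_mulVec,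
      Matrix.mulVec_smul, hproj, smul_zero, sub_zero]
  have hvne : v ≠ 0 := by
    intro h
    have h2 := congrFun h r
    rw [hvdef] at h2
    simp [Pi.single_eq_same, Pi.single_eq_of_ne hrs] at h2
  refine ⟨hTv, ?_⟩
  exact Module.End.hasEigenvalue_of_hasEigenvector
    ⟨Module.End.mem_eigenspace_iff.2 (by rw [Matrix.toLin'_apply]; exact hTv), hvne⟩
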